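/- The generating function S(x,y) of r-canonical secondary structures with minimum arc-length λ satisfies S(x,y) = (A(x,y)/B(x,y)) · C((x²y)^r · A(x,y)/B(x,y)²), where C(z) = (1−√(1−4z))/(2z) is the Catalan generating function, A(x,y) = 1 − x²y + (x²y)^r, and B(x,y) = (1−x)A(x,y) + (x²y)^r Σ_{i=0}^{λ−2} x^i. -/

import Mathlib

open PowerSeries

/-- `M` is an `r`-canonical RNA secondary structure on vertices `1,…,n` with minimum
arc-length `lam`. -/
def IsCanSecStr (n lam r : ℕ) (M : Finset (ℕ × ℕ)) : Prop :=
  (∀ p ∈ M, 1 ≤ p.1 ∧ p.1 + lam ≤ p.2 ∧ p.2 ≤ n) ∧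
  (∀ p ∈ M, ∀ q ∈ M, p ≠ q → p.1 ≠ q.1 ∧ p.1 ≠ q.2 ∧ p.2 ≠ q.1 ∧ p.2 ≠ q.2) ∧
  (∀ p ∈ M, ∀ q ∈ M, ¬ (p.1 < q.1 ∧ q.1 < p.2 ∧ p.2 < q.2)) ∧
  (∀ p ∈ M, (p.1 - 1, p.2 + 1) ∉ M → ∀ t < r, (p.1 + t, p.2 - t) ∈ M)

noncomputable def sCount (lam r n l : ℕ) : ℕ :=
  Nat.card {M : Finset (ℕ × ℕ) // IsCanSecStr n lam r M ∧ M.card = l}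

/-- The bivariate generating function `S(x,y)`. -/
noncomputable def Sgf (lam r : ℕ) : PowerSeries (Polynomial ℚ) :=
  PowerSeries.mk fun n =>
    ∑ l ∈ Finset.range (n + 1), Polynomial.C ((sCount lam r n l : ℚ)) * Polynomial.X ^ l

/-- The monomial `x²y`. -/
noncomputable def xxy : PowerSeries (Polynomial ℚ) :=
  PowerSeries.X ^ 2 * PowerSeries.C Polynomial.X

/-- `A(x,y) = 1 - x²y + (x²y)^r`. -/
noncomputable def Agf (r : ℕ) : PowerSeries (Polynomial ℚ) := 1 - xxy + xxy ^ r

/-- `B(x,y) = (1-x)·A(x,y) + (x²y)^r · Σ_{i=0}^{λ-2} x^i`. -/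
noncomputable def Bgf (lam r : ℕ) : PowerSeries (Polynomial ℚ) :=
  (1 - PowerSeries.X) * Agf r + xxy ^ r * ∑ i ∈ Finset.range (lam - 1), PowerSeries.X ^ i

/-- The argument `z₀ = (x²y)^r · A(x,y)/B(x,y)²` of the Catalan generating function. -/
noncomputable def z0 (lam r : ℕ) : PowerSeries (Polynomial ℚ) :=
  xxy ^ r * Agf r * (Ring.inverse (Bgf lam r)) ^ 2

/-- `C(z₀) = Σ_{m≥0} Cat(m)·z₀^m`, the Catalan generating function evaluated at `z₀`; since
`z₀` has zero constant term, the coefficient of `x^n` only involves `m ≤ n`. -/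
noncomputable def CatAt (lam r : ℕ) : PowerSeries (Polynomial ℚ) :=
  PowerSeries.mk fun n =>
    ∑ m ∈ Finset.range (n + 1),
      (catalan m : Polynomial ℚ) * PowerSeries.coeff n ((z0 lam r) ^ m)


section Analytic
open Finset

variable {R : Type*} [CommRing R]

lemma coeff_X_pow_mul_of_lt {k n : ℕ} (h : n < k) (f : PowerSeries R) :
    coeff n (X ^ k * f) = 0 := by
  rw [coeff_mul]
  refine Finset.sum_eq_zero (fun p hp => ?_)
  rw [coeff_X_pow]
  have : p.1 ≤ n := by have := Finset.HasAntidiagonal.mem_antidiagonal.1 hp; omega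
  rw [if_neg (by omega), zero_mul]

lemma coeff_pow_eq_zero_of_lt {z : PowerSeries R} (hz : constantCoeff z = 0)
    {m n : ℕ} (h : n < m) : coeff n (z ^ m) = 0 := by
  obtain ⟨w, rfl⟩ := PowerSeries.X_dvd_iff.2 hz
  rw [mul_pow, coeff_X_pow_mul_of_lt h]

lemma coeff_mul_congr {f f' g g' : PowerSeries R} {n : ℕ}
    (hf : ∀ k ≤ n, coeff k f = coeff k f') (hg : ∀ k ≤ n, coeff k g = coeff k g') :
    coeff n (f * g) = coeff n (f' * g') := by
  rw [coeff_mul, coeff_mul]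
  refine Finset.sum_congr rfl (fun p hp => ?_)
  have hp' := Finset.HasAntidiagonal.mem_antidiagonal.1 hp
  rw [hf p.1 (by omega), hg p.2 (by omega)]

/-- The Catalan functional equation for the truncated substitution. -/
lemma catAt_eq (z : PowerSeries R) (hz : constantCoeff z = 0) :
    (PowerSeries.mk fun n => ∑ m ∈ range (n + 1), (catalan m : R) * coeff n (z ^ m)) =
      1 + z * ((PowerSeries.mk fun n => ∑ m ∈ range (n + 1), (catalan m : R) * coeff n (z ^ m)) *
        (PowerSeries.mk fun n => ∑ m ∈ range (n + 1), (catalan m : R) * coeff n (z ^ m))) := by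
  set Cz : PowerSeries R :=
    PowerSeries.mk fun n => ∑ m ∈ range (n + 1), (catalan m : R) * coeff n (z ^ m) with hCz
  ext n
  set T : PowerSeries R := ∑ m ∈ range (n + 1), PowerSeries.C (catalan m : R) * z ^ m with hT
  have hTk : ∀ k ≤ n, coeff k Cz = coeff k T := by
    intro k hk
    rw [hCz, coeff_mk, hT, map_sum]
    simp only [coeff_C_mul]
    refine Finset.sum_subset (fun x hx => by
      simp only [mem_range] at hx ⊢; omega) ?_
    intro m _ hm
    simp only [mem_range, not_lt] at hm
    rw [coeff_pow_eq_zero_of_lt hz (by omega), mul_zero]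
  have key : coeff n (z * (Cz * Cz)) = coeff n (z * (T * T)) := by
    refine coeff_mul_congr (fun k _ => rfl) (fun k hk => ?_)
    exact coeff_mul_congr (fun j hj => hTk j (le_trans hj hk)) (fun j hj => hTk j (le_trans hj hk))
  rw [map_add, key]
  have hexp : z * (T * T) = ∑ m1 ∈ range (n+1), ∑ m2 ∈ range (n+1),
      PowerSeries.C ((catalan m1 : R) * (catalan m2 : R)) * z ^ (m1 + m2 + 1) := by
    rw [hT, Finset.sum_mul_sum]
    rw [Finset.mul_sum]
    refine Finset.sum_congr rfl (fun m1 _ => ?_)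
    rw [Finset.mul_sum]
    refine Finset.sum_congr rfl (fun m2 _ => ?_)
    rw [map_mul]
    ring
  rw [hexp, map_sum]
  simp only [map_sum, coeff_C_mul]
  -- LHS : coeff n Cz = δ + Σ
  have hL : coeff n Cz = coeff n (1 : PowerSeries R)
      + ∑ m ∈ range n, (catalan (m+1) : R) * coeff n (z ^ (m+1)) := by
    rw [hCz, coeff_mk, Finset.sum_range_succ']
    have h0 : (catalan 0 : R) * coeff n (z ^ 0) = coeff n 1 := by simp
    rw [h0, add_comm]
  rw [hL]
  congr 1
  -- now: Σ_{m<n} c(m+1) coeff n z^{m+1} = Σ_{m1,m2 ∈ range(n+1)} c m1 c m2 coeff n z^{m1+m2+1}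
  have hstep : ∀ m ∈ range n, (catalan (m+1) : R) * coeff n (z ^ (m+1)) =
      ∑ ij ∈ Finset.HasAntidiagonal.antidiagonal m, (catalan ij.1 : R) * (catalan ij.2 : R) * coeff n (z ^ (m+1)) := by
    intro m _
    rw [catalan_succ']
    push_cast
    rw [Finset.sum_mul]
  rw [Finset.sum_congr rfl hstep]
  have hshrink : ∀ m1 ∈ range (n+1),
      ∑ m2 ∈ range (n+1), (catalan m1 : R) * (catalan m2 : R) * coeff n (z ^ (m1 + m2 + 1)) =
      ∑ m2 ∈ range (n - m1), (catalan m1 : R) * (catalan m2 : R) * coeff n (z ^ (m1 + m2 + 1)) := by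
    intro m1 hm1
    refine (Finset.sum_subset (fun x hx => by simp only [mem_range] at hx ⊢; omega) ?_).symm
    intro m2 _ hm2
    simp only [mem_range, not_lt] at hm2
    rw [coeff_pow_eq_zero_of_lt hz (by omega), mul_zero]
  rw [Finset.sum_congr rfl hshrink]
  rw [Finset.sum_sigma' (range n) (fun m => Finset.HasAntidiagonal.antidiagonal m)
    (fun m ij => (catalan ij.1 : R) * (catalan ij.2 : R) * coeff n (z ^ (m + 1)))]
  rw [Finset.sum_sigma' (range (n+1)) (fun m1 => range (n - m1))
    (fun m1 m2 => (catalan m1 : R) * (catalan m2 : R) * coeff n (z ^ (m1 + m2 + 1)))]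
  refine Finset.sum_nbij' (fun x => (⟨x.2.1, x.2.2⟩ : (_ : ℕ) × ℕ))
    (fun x => (⟨x.1 + x.2, (x.1, x.2)⟩ : (_ : ℕ) × ℕ × ℕ)) ?_ ?_ ?_ ?_ ?_
  · rintro ⟨m, i, j⟩ hx
    simp only [Finset.mem_sigma, mem_range, Finset.HasAntidiagonal.mem_antidiagonal] at hx ⊢
    omega
  · rintro ⟨m1, m2⟩ hx
    simp only [Finset.mem_sigma, mem_range] at hx
    simp only [Finset.mem_sigma, mem_range, Finset.HasAntidiagonal.mem_antidiagonal]
    exact ⟨by omega, trivial⟩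
  · rintro ⟨m, i, j⟩ hx
    simp only [Finset.mem_sigma, mem_range, Finset.HasAntidiagonal.mem_antidiagonal] at hx
    simp only [Sigma.mk.inj_iff, heq_eq_eq]
    exact ⟨hx.2, trivial⟩
  · rintro ⟨m1, m2⟩ _
    rfl
  · rintro ⟨m, i, j⟩ hx
    simp only [Finset.mem_sigma, mem_range, Finset.HasAntidiagonal.mem_antidiagonal] at hx
    rw [hx.2]


variable {R : Type*} [CommRing R]

lemma coeff_X_pow_mul_of_lt' {k n : ℕ} (h : n < k) (f : PowerSeries R) :
    coeff n (X ^ k * f) = 0 := by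
  rw [coeff_mul]
  refine Finset.sum_eq_zero (fun p hp => ?_)
  rw [coeff_X_pow]
  have : p.1 ≤ n := by have := Finset.HasAntidiagonal.mem_antidiagonal.1 hp; omega
  rw [if_neg (by omega), zero_mul]

lemma quad_uniq {B Z A f g : PowerSeries R} (hB : constantCoeff B = 1)
    (hZ : (X : PowerSeries R) ^ 2 ∣ Z)
    (hf : B * f = A + Z * (f * f)) (hg : B * g = A + Z * (g * g)) : f = g := by
  obtain ⟨w, rfl⟩ := hZ
  have key : B * (f - g) = X ^ 2 * ((w * (f + g)) * (f - g)) := by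
    linear_combination hf - hg
  rw [← sub_eq_zero]
  ext n
  induction n using Nat.strong_induction_on with
  | _ n ih =>
  simp only [map_zero]
  have h1 : coeff n (B * (f - g)) = coeff n (f - g) := by
    rw [coeff_mul]
    rw [Finset.sum_eq_single_of_mem (0, n) (by simp)]
    · rw [coeff_zero_eq_constantCoeff, hB, one_mul]
    · rintro ⟨a, b⟩ hp hne
      have hab := Finset.HasAntidiagonal.mem_antidiagonal.1 hp
      have hb : b < n := by
        rcases Nat.eq_zero_or_pos a with h | h
        · exact absurd (by simp [h] at hab ⊢; omega) hne
        · omega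
      have := ih b hb
      simp only [map_zero] at this ⊢
      rw [this, mul_zero]
  have h2 : coeff n (X ^ 2 * ((w * (f + g)) * (f - g))) = 0 := by
    rcases lt_or_ge n 2 with h | h
    · exact coeff_X_pow_mul_of_lt' h _
    · rw [show n = (n - 2) + 2 by omega, coeff_X_pow_mul, coeff_mul]
      refine Finset.sum_eq_zero (fun p hp => ?_)
      have hab := Finset.HasAntidiagonal.mem_antidiagonal.1 hp
      have : p.2 < n := by omega
      have := ih p.2 this
      simp only [map_zero] at this ⊢
      rw [this, mul_zero]
  have := congrArg (coeff n) key
  rw [h1, h2] at this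
  simpa using this

end Analytic

open scoped Classical in
/-- The finset of all `r`-canonical structures on `n` vertices. -/
noncomputable def SS (lam r n : ℕ) : Finset (Finset (ℕ × ℕ)) :=
  ((Finset.Icc 1 n) ×ˢ (Finset.Icc 1 n)).powerset.filter (fun M => IsCanSecStr n lam r M)

open scoped Classical in
/-- The finset of spanned (closed) structures on `n` vertices. -/
noncomputable def WW (lam r n : ℕ) : Finset (Finset (ℕ × ℕ)) :=
  (SS lam r n).filter (fun M => (1, n) ∈ M)

noncomputable def sP (lam r n : ℕ) : Polynomial ℚ := ∑ M ∈ SS lam r n, Polynomial.X ^ M.card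
noncomputable def wP (lam r n : ℕ) : Polynomial ℚ := ∑ M ∈ WW lam r n, Polynomial.X ^ M.card

lemma mem_SS {lam r n : ℕ} {M : Finset (ℕ × ℕ)} (hlam : 1 ≤ lam) :
    M ∈ SS lam r n ↔ IsCanSecStr n lam r M := by
  classical
  simp only [SS, Finset.mem_filter, Finset.mem_powerset, and_iff_right_iff_imp]
  intro h p hp
  obtain ⟨h1, h2, h3⟩ := h.1 p hp
  simp only [Finset.mem_product, Finset.mem_Icc]
  omega

lemma mem_WW {lam r n : ℕ} {M : Finset (ℕ × ℕ)} (hlam : 1 ≤ lam) :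
    M ∈ WW lam r n ↔ IsCanSecStr n lam r M ∧ (1, n) ∈ M := by
  classical
  simp [WW, Finset.mem_filter, mem_SS hlam]

lemma card_le_of_mem_SS {lam r n : ℕ} {M : Finset (ℕ × ℕ)} (hlam : 1 ≤ lam)
    (hM : M ∈ SS lam r n) : M.card ≤ n := by
  rw [mem_SS hlam] at hM
  have hinj : Set.InjOn Prod.snd (M : Set (ℕ × ℕ)) := by
    intro p hp q hq hpq
    by_contra hne
    exact (hM.2.1 p hp q hq hne).2.2.2 hpq
  calc M.card = (M.image Prod.snd).card := (Finset.card_image_of_injOn hinj).symm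
    _ ≤ (Finset.Icc 1 n).card := by
        apply Finset.card_le_card
        intro x hx
        simp only [Finset.mem_image] at hx
        obtain ⟨p, hp, rfl⟩ := hx
        have := hM.1 p hp
        simp only [Finset.mem_Icc]
        omega
    _ = n := by simp

lemma sCount_eq_card {lam r n l : ℕ} (hlam : 1 ≤ lam) :
    sCount lam r n l = ((SS lam r n).filter (fun M => M.card = l)).card := by
  classical
  rw [sCount]
  have e : {M : Finset (ℕ × ℕ) // IsCanSecStr n lam r M ∧ M.card = l} ≃
      {M // M ∈ (SS lam r n).filter (fun M => M.card = l)} :=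
    Equiv.subtypeEquivRight (fun M => by simp [Finset.mem_filter, mem_SS hlam])
  rw [Nat.card_congr e, Nat.card_eq_fintype_card, Fintype.card_coe]

lemma coeff_Sgf (lam r : ℕ) (hlam : 1 ≤ lam) (n : ℕ) :
    PowerSeries.coeff n (Sgf lam r) = sP lam r n := by
  classical
  rw [Sgf, coeff_mk, sP]
  rw [← Finset.sum_fiberwise_of_maps_to (g := fun M : Finset (ℕ × ℕ) => M.card)
      (t := Finset.range (n+1)) (fun M hM => Finset.mem_range.2 (Nat.lt_succ_of_le (card_le_of_mem_SS hlam hM)))]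
  refine Finset.sum_congr rfl (fun l _ => ?_)
  rw [sCount_eq_card hlam]
  rw [Finset.sum_congr rfl (fun M hM => by rw [(Finset.mem_filter.1 hM).2])]
  simp [Finset.sum_const, Polynomial.C_eq_natCast]


/-- shift all arcs up by `k` -/
def upS (k : ℕ) (M : Finset (ℕ × ℕ)) : Finset (ℕ × ℕ) := M.image (fun p => (p.1 + k, p.2 + k))

/-- shift all arcs down by `k` -/
def downS (k : ℕ) (M : Finset (ℕ × ℕ)) : Finset (ℕ × ℕ) := M.image (fun p => (p.1 - k, p.2 - k))

lemma mem_upS {k a b : ℕ} {M : Finset (ℕ × ℕ)} (hM : ∀ p ∈ M, 1 ≤ p.1 ∧ p.1 ≤ p.2) :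
    (a, b) ∈ upS k M ↔ (k < a ∧ k < b ∧ (a - k, b - k) ∈ M) := by
  simp only [upS, Finset.mem_image, Prod.mk.injEq]
  constructor
  · rintro ⟨p, hp, rfl, rfl⟩
    have := hM p hp
    refine ⟨by omega, by omega, by simpa using hp⟩
  · rintro ⟨ha, hb, h⟩
    exact ⟨(a - k, b - k), h, by omega, by omega⟩

lemma mem_downS {k a b : ℕ} {M : Finset (ℕ × ℕ)} (hM : ∀ p ∈ M, k < p.1 ∧ k < p.2) :
    (a, b) ∈ downS k M ↔ (a + k, b + k) ∈ M := by
  simp only [downS, Finset.mem_image, Prod.mk.injEq]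
  constructor
  · rintro ⟨p, hp, rfl, rfl⟩
    have := hM p hp
    have : p = (p.1 - k + k, p.2 - k + k) := by ext <;> simp <;> omega
    rwa [← this]
  · intro h
    exact ⟨(a + k, b + k), h, by omega, by omega⟩

lemma downS_upS (k : ℕ) (M : Finset (ℕ × ℕ)) : downS k (upS k M) = M := by
  rw [downS, upS, Finset.image_image]
  have : ((fun p : ℕ × ℕ => (p.1 - k, p.2 - k)) ∘ fun p => (p.1 + k, p.2 + k)) = id := by
    funext p; simp
  rw [this, Finset.image_id]

lemma upS_downS {k : ℕ} {M : Finset (ℕ × ℕ)} (hM : ∀ p ∈ M, k < p.1 ∧ k < p.2) :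
    upS k (downS k M) = M := by
  rw [upS, downS, Finset.image_image]
  rw [Finset.image_congr (g := id) (fun p hp => by
    have := hM p (by simpa using hp); simp; ext <;> simp <;> omega)]
  rw [Finset.image_id]

lemma card_upS (k : ℕ) (M : Finset (ℕ × ℕ)) : (upS k M).card = M.card :=
  Finset.card_image_of_injective _ (fun p q h => by
    simp only [Prod.mk.injEq] at h; ext <;> omega)

lemma card_downS {k : ℕ} {M : Finset (ℕ × ℕ)} (hM : ∀ p ∈ M, k < p.1 ∧ k < p.2) :
    (downS k M).card = M.card :=
  Finset.card_image_of_injOn (fun p hp q hq h => by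
    have h1 := hM p hp; have h2 := hM q hq
    simp only [Prod.mk.injEq] at h; ext <;> omega)

/-- changing the ambient `n` -/
lemma isCan_of {n n' lam r : ℕ} {M : Finset (ℕ × ℕ)} (h : IsCanSecStr n lam r M)
    (h2 : ∀ p ∈ M, p.2 ≤ n') : IsCanSecStr n' lam r M :=
  ⟨fun p hp => ⟨(h.1 p hp).1, (h.1 p hp).2.1, h2 p hp⟩, h.2.1, h.2.2.1, h.2.2.2⟩

lemma isCan_arcs {n lam r : ℕ} {M : Finset (ℕ × ℕ)} (h : IsCanSecStr n lam r M) (hlam : 1 ≤ lam) :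
    ∀ p ∈ M, 1 ≤ p.1 ∧ p.1 ≤ p.2 := fun p hp => by have := h.1 p hp; omega

/-- shifting a standalone structure up -/
lemma isCan_upS {n lam r k : ℕ} {M : Finset (ℕ × ℕ)} (hlam : 1 ≤ lam)
    (h : IsCanSecStr n lam r M) : IsCanSecStr (n + k) lam r (upS k M) := by
  have harcs := isCan_arcs h hlam
  obtain ⟨h1, h2, h3, h4⟩ := h
  refine ⟨?_, ?_, ?_, ?_⟩
  · rintro ⟨a, b⟩ hp
    rw [mem_upS harcs] at hp
    have := h1 _ hp.2.2
    try simp only at this ⊢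
    omega
  · rintro ⟨a, b⟩ hp ⟨c, d⟩ hq hne
    rw [mem_upS harcs] at hp hq
    have := h2 _ hp.2.2 _ hq.2.2 (by
      intro hcon
      apply hne
      simp only [Prod.mk.injEq] at hcon ⊢
      omega)
    try simp only at this ⊢
    omega
  · rintro ⟨a, b⟩ hp ⟨c, d⟩ hq
    rw [mem_upS harcs] at hp hq
    have := h3 _ hp.2.2 _ hq.2.2
    try simp only at this ⊢
    omega
  · rintro ⟨a, b⟩ hp hpar t ht
    rw [mem_upS harcs] at hp
    obtain ⟨ha, hb, hmem⟩ := hp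
    have harc := h1 _ hmem
    try simp only at harc
    have hpar' : (a - k - 1, b - k + 1) ∉ M := by
      intro hcon
      apply hpar
      have hc := harcs _ hcon
      try simp only at hc
      rw [mem_upS harcs]
      simp only
      refine ⟨by omega, by omega, by convert hcon using 2 <;> omega⟩
    have := h4 _ hmem hpar' t ht
    have harc2 := h1 _ this
    try simp only at harc2 this
    rw [mem_upS harcs]
    simp only
    refine ⟨by omega, by omega, by convert this using 2 <;> omega⟩
  
/-- shifting a structure supported on `[k+1, n]` down by `k` -/
lemma isCan_downS {n lam r k : ℕ} {M : Finset (ℕ × ℕ)} (hlam : 1 ≤ lam)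
    (h : IsCanSecStr n lam r M) (hlow : ∀ p ∈ M, k < p.1) :
    IsCanSecStr (n - k) lam r (downS k M) := by
  have harcs : ∀ p ∈ M, k < p.1 ∧ k < p.2 := fun p hp => by
    have := h.1 p hp; have := hlow p hp; omega
  obtain ⟨h1, h2, h3, h4⟩ := h
  refine ⟨?_, ?_, ?_, ?_⟩
  · rintro ⟨a, b⟩ hp
    rw [mem_downS harcs] at hp
    have := h1 _ hp
    have := harcs _ hp
    try simp only at this ⊢
    omega
  · rintro ⟨a, b⟩ hp ⟨c, d⟩ hq hne
    rw [mem_downS harcs] at hp hq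
    have := h2 _ hp _ hq (by
      intro hcon
      apply hne
      simp only [Prod.mk.injEq] at hcon ⊢
      omega)
    try simp only at this ⊢
    omega
  · rintro ⟨a, b⟩ hp ⟨c, d⟩ hq
    rw [mem_downS harcs] at hp hq
    have := h3 _ hp _ hq
    try simp only at this ⊢
    omega
  · rintro ⟨a, b⟩ hp hpar t ht
    rw [mem_downS harcs] at hp
    have harc := h1 _ hp
    have hk := harcs _ hp
    try simp only at harc hk
    have hpar' : (a + k - 1, b + k + 1) ∉ M := by
      intro hcon
      apply hpar
      have hc := harcs _ hcon
      try simp only at hc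
      rw [mem_downS harcs]
      convert hcon using 2 <;> simp <;> omega
    have := h4 _ hp hpar' t ht
    have harc2 := h1 _ this
    have hk2 := harcs _ this
    try simp only at harc2 this hk2
    rw [mem_downS harcs]
    convert this using 2 <;> simp <;> omega

/-- union of a structure on `[1,c]` with a structure on `[c+1, n]` -/
lemma isCan_union {n c lam r : ℕ} {L R : Finset (ℕ × ℕ)} (hlam : 1 ≤ lam) (hcn : c ≤ n)
    (hL : IsCanSecStr c lam r L) (hR : IsCanSecStr n lam r R)
    (hlow : ∀ p ∈ R, c < p.1) : IsCanSecStr n lam r (L ∪ R) := by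
  have hLb : ∀ p ∈ L, 1 ≤ p.1 ∧ p.1 + lam ≤ p.2 ∧ p.2 ≤ c := hL.1
  have hRb : ∀ p ∈ R, c < p.1 ∧ p.1 + lam ≤ p.2 ∧ p.2 ≤ n := fun p hp =>
    ⟨hlow p hp, (hR.1 p hp).2.1, (hR.1 p hp).2.2⟩
  refine ⟨?_, ?_, ?_, ?_⟩
  · intro p hp
    rcases Finset.mem_union.1 hp with h | h
    · have := hLb p h; omega
    · have := hRb p h; omega
  · intro p hp q hq hne
    rcases Finset.mem_union.1 hp with h | h <;> rcases Finset.mem_union.1 hq with h' | h'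
    · exact hL.2.1 p h q h' hne
    · have u1 := hLb p h; have u2 := hRb q h'; omega
    · have u1 := hRb p h; have u2 := hLb q h'; omega
    · exact hR.2.1 p h q h' hne
  · intro p hp q hq
    rcases Finset.mem_union.1 hp with h | h <;> rcases Finset.mem_union.1 hq with h' | h'
    · exact hL.2.2.1 p h q h'
    · have u1 := hLb p h; have u2 := hRb q h'; omega
    · have u1 := hRb p h; have u2 := hLb q h'; omega
    · exact hR.2.2.1 p h q h'
  · intro p hp hpar t ht
    rcases Finset.mem_union.1 hp with h | h
    · have hb := hLb p h
      have : (p.1 - 1, p.2 + 1) ∉ L := fun hc => hpar (Finset.mem_union_left _ hc)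
      have hst := hL.2.2.2 p h this t ht
      exact Finset.mem_union_left _ hst
    · have hb := hRb p h
      have : (p.1 - 1, p.2 + 1) ∉ R := fun hc => hpar (Finset.mem_union_right _ hc)
      have hst := hR.2.2.2 p h this t ht
      exact Finset.mem_union_right _ hst


section StructLemmas
variable {lam r n : ℕ} {M : Finset (ℕ × ℕ)}

lemma snd_unique (h : IsCanSecStr n lam r M) {p q : ℕ × ℕ} (hp : p ∈ M) (hq : q ∈ M)
    (he : p.2 = q.2) : p = q := by
  by_contra hne
  exact (h.2.1 p hp q hq hne).2.2.2 he

lemma fst_unique (h : IsCanSecStr n lam r M) {p q : ℕ × ℕ} (hp : p ∈ M) (hq : q ∈ M)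
    (he : p.1 = q.1) : p = q := by
  by_contra hne
  exact (h.2.1 p hp q hq hne).1 he

lemma isCan_empty : IsCanSecStr n lam r (∅ : Finset (ℕ × ℕ)) := by
  refine ⟨?_, ?_, ?_, ?_⟩ <;> simp

lemma SS_small (hlam : 1 ≤ lam) (h : n ≤ lam) : SS lam r n = {∅} := by
  ext M
  simp only [Finset.mem_singleton, mem_SS hlam]
  constructor
  · intro hM
    refine Finset.eq_empty_of_forall_notMem (fun p hp => ?_)
    have := hM.1 p hp
    omega
  · rintro rfl
    exact isCan_empty

lemma sP_small (hlam : 1 ≤ lam) (h : n ≤ lam) : sP lam r n = 1 := by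
  rw [sP, SS_small hlam h]
  simp

lemma sP_zero (hlam : 1 ≤ lam) : sP lam r 0 = 1 := sP_small hlam (by omega)

/-- the stack below the outer arc `(1, n)` -/
lemma stack_mem (h : IsCanSecStr n lam r M) (h1n : (1, n) ∈ M) {t : ℕ} (ht : t < r) :
    (1 + t, n - t) ∈ M := by
  have hpar : ((1 : ℕ) - 1, n + 1) ∉ M := by
    intro hc
    have := h.1 _ hc
    try simp only at this
    omega
  exact h.2.2.2 (1, n) h1n hpar t ht

lemma WW_empty (hlam : 1 ≤ lam) (hr : 1 ≤ r) (h : n < 2 * r + lam - 1) :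
    WW lam r n = ∅ := by
  refine Finset.eq_empty_of_forall_notMem (fun M hM => ?_)
  rw [mem_WW hlam] at hM
  have hst := stack_mem hM.1 hM.2 (show r - 1 < r by omega)
  have := hM.1.1 _ hst
  try simp only at this
  omega

lemma wP_small (hlam : 1 ≤ lam) (hr : 1 ≤ r) (h : n < 2 * r + lam - 1) :
    wP lam r n = 0 := by
  rw [wP, WW_empty hlam hr h]
  simp

/-- an arc with small first coordinate is a stack arc -/
lemma stack_arc (h : IsCanSecStr n lam r M) (h1n : (1, n) ∈ M) {p : ℕ × ℕ} (hp : p ∈ M)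
    (hf : p.1 ≤ r) : p = (p.1, n - (p.1 - 1)) := by
  have h1 : 1 ≤ p.1 := (h.1 p hp).1
  have hst := stack_mem h h1n (show p.1 - 1 < r by omega)
  have he : 1 + (p.1 - 1) = p.1 := by omega
  have : (1 + (p.1 - 1), n - (p.1 - 1)) = (p.1, n - (p.1 - 1)) := by rw [he]
  rw [this] at hst
  exact fst_unique h hp hst (by simp)

/-- an arc with large second coordinate is a stack arc -/
lemma stack_arc' (h : IsCanSecStr n lam r M) (h1n : (1, n) ∈ M) {p : ℕ × ℕ} (hp : p ∈ M)
    (hf : n - r < p.2) : p = (n - p.2 + 1, p.2) := by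
  have h1 := h.1 p hp
  have hst := stack_mem h h1n (show n - p.2 < r by omega)
  have hpn : p.2 ≤ n := (h.1 p hp).2.2
  have he1 : 1 + (n - p.2) = n - p.2 + 1 := by omega
  have he2 : n - (n - p.2) = p.2 := by omega
  have : (1 + (n - p.2), n - (n - p.2)) = (n - p.2 + 1, p.2) := by rw [he1, he2]
  rw [this] at hst
  exact snd_unique h hp hst (by simp)

end StructLemmas

section E1
variable {lam r : ℕ}

lemma partner_filter {n i : ℕ} {M : Finset (ℕ × ℕ)} (h : IsCanSecStr n lam r M)
    (hin : (i, n) ∈ M) : M.filter (fun p => p.2 = n) = {(i, n)} := by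
  ext q
  simp only [Finset.mem_filter, Finset.mem_singleton]
  constructor
  · rintro ⟨hq, hq2⟩
    exact snd_unique h hq hin hq2
  · rintro rfl
    exact ⟨hin, rfl⟩

lemma split_arcs {n i : ℕ} {M : Finset (ℕ × ℕ)} (h : IsCanSecStr n lam r M)
    (hin : (i, n) ∈ M) : ∀ p ∈ M, p.2 < i ∨ i ≤ p.1 := by
  intro p hp
  by_contra hcon
  push_neg at hcon
  obtain ⟨h2i, h1i⟩ := hcon
  have hne : p ≠ (i, n) := by
    intro he; rw [he] at h1i; simp at h1i
  have hd := h.2.1 p hp _ hin hne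
  have hb := h.1 p hp
  try simp only at hd hb
  exact h.2.2.1 p hp _ hin (by simp only; omega)

lemma isCan_filter_right {n i : ℕ} {M : Finset (ℕ × ℕ)} (h : IsCanSecStr n lam r M)
    (hin : (i, n) ∈ M) : IsCanSecStr n lam r (M.filter (fun p => i ≤ p.1)) := by
  classical
  refine ⟨fun p hp => h.1 p (Finset.mem_filter.1 hp).1,
    fun p hp q hq => h.2.1 p (Finset.mem_filter.1 hp).1 q (Finset.mem_filter.1 hq).1,
    fun p hp q hq => h.2.2.1 p (Finset.mem_filter.1 hp).1 q (Finset.mem_filter.1 hq).1,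
    ?_⟩
  intro p hp hpar t ht
  obtain ⟨hpM, hpi⟩ := Finset.mem_filter.1 hp
  rcases eq_or_lt_of_le hpi with heq | hlt
  · -- p.1 = i, so p = (i, n)
    have hpe : p = (i, n) := fst_unique h hpM hin heq.symm
    have hparM : (p.1 - 1, p.2 + 1) ∉ M := by
      intro hc
      have := h.1 _ hc
      try simp only at this
      rw [hpe] at this
      try simp only at this
      omega
    have hst := h.2.2.2 p hpM hparM t ht
    refine Finset.mem_filter.2 ⟨hst, ?_⟩
    simp only
    omega
  · have hparM : (p.1 - 1, p.2 + 1) ∉ M := by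
      intro hc
      exact hpar (Finset.mem_filter.2 ⟨hc, by simp only; omega⟩)
    have hst := h.2.2.2 p hpM hparM t ht
    refine Finset.mem_filter.2 ⟨hst, by simp only; omega⟩

lemma isCan_filter_left {n i : ℕ} {M : Finset (ℕ × ℕ)} (hlam : 1 ≤ lam)
    (h : IsCanSecStr n lam r M) (hin : (i, n) ∈ M) :
    IsCanSecStr (i - 1) lam r (M.filter (fun p => ¬ i ≤ p.1)) := by
  classical
  have hsp := split_arcs h hin
  have hbound : ∀ p ∈ M.filter (fun p => ¬ i ≤ p.1), p.2 ≤ i - 1 := by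
    intro p hp
    obtain ⟨hpM, hpi⟩ := Finset.mem_filter.1 hp
    rcases hsp p hpM with h' | h'
    · omega
    · omega
  refine isCan_of ⟨fun p hp => h.1 p (Finset.mem_filter.1 hp).1,
    fun p hp q hq => h.2.1 p (Finset.mem_filter.1 hp).1 q (Finset.mem_filter.1 hq).1,
    fun p hp q hq => h.2.2.1 p (Finset.mem_filter.1 hp).1 q (Finset.mem_filter.1 hq).1,
    ?_⟩ hbound
  intro p hp hpar t ht
  obtain ⟨hpM, hpi⟩ := Finset.mem_filter.1 hp
  have hp2 : p.2 < i := by rcases hsp p hpM with h' | h' <;> omega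
  have hparM : (p.1 - 1, p.2 + 1) ∉ M := by
    intro hc
    refine hpar (Finset.mem_filter.2 ⟨hc, ?_⟩)
    try simp only at *
    omega
  have hst := h.2.2.2 p hpM hparM t ht
  have hb := h.1 _ hst
  try simp only at hb
  refine Finset.mem_filter.2 ⟨hst, by simp only; omega⟩

lemma E1_fiber (hlam : 1 ≤ lam) (hr : 1 ≤ r) (k j : ℕ) (hj : j ∈ Finset.range (k + 1)) :
    ∑ M ∈ ((SS lam r (k+1)).filter (fun M => ¬ ∀ p ∈ M, p.2 ≠ k + 1)).filter
        (fun M => (k + 1) - (M.filter (fun p => p.2 = k + 1)).sum Prod.fst = j),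
      (Polynomial.X : Polynomial ℚ) ^ M.card
    = wP lam r (j + 1) * sP lam r (k - j) := by
  classical
  rw [Finset.mem_range] at hj
  set n := k + 1 with hnd
  set i := n - j with hid
  have hi1 : 1 ≤ i := by omega
  have hij : i + j = n := by omega
  -- characterize fiber membership
  have fiber_iff : ∀ M : Finset (ℕ × ℕ),
      (M ∈ ((SS lam r n).filter (fun M => ¬ ∀ p ∈ M, p.2 ≠ n)).filter
        (fun M => n - (M.filter (fun p => p.2 = n)).sum Prod.fst = j))
      ↔ (IsCanSecStr n lam r M ∧ (i, n) ∈ M) := by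
    intro M
    simp only [Finset.mem_filter, mem_SS hlam, and_assoc]
    constructor
    · rintro ⟨hcan, hex, hg⟩
      push_neg at hex
      obtain ⟨p₀, hp₀, hp₀2⟩ := hex
      have hpe : p₀ = (p₀.1, n) := by
        ext
        · rfl
        · exact hp₀2
      rw [hpe] at hp₀
      rw [partner_filter hcan hp₀, Finset.sum_singleton] at hg
      have hb := hcan.1 _ hp₀
      try simp only at hb hg
      have : p₀.1 = i := by omega
      rw [this] at hp₀
      exact ⟨hcan, hp₀⟩
    · rintro ⟨hcan, hin⟩
      refine ⟨hcan, ?_, ?_⟩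
      · push_neg
        exact ⟨(i, n), hin, rfl⟩
      · rw [partner_filter hcan hin, Finset.sum_singleton]
        have hb := hcan.1 _ hin
        try simp only at hb ⊢
        omega
  -- RHS as a sum over a product
  rw [wP, sP, Finset.sum_mul_sum]
  rw [← Finset.sum_product' (s := WW lam r (j+1)) (t := SS lam r (k-j))
    (f := fun V L => (Polynomial.X : Polynomial ℚ) ^ V.card * (Polynomial.X : Polynomial ℚ) ^ L.card)]
  refine Finset.sum_nbij'
    (i := fun M => (downS (i-1) (M.filter (fun p => i ≤ p.1)), M.filter (fun p => ¬ i ≤ p.1)))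
    (j := fun q => q.2 ∪ upS (i-1) q.1) ?_ ?_ ?_ ?_ ?_
  · -- maps into product
    intro M hM
    rw [fiber_iff] at hM
    obtain ⟨hcan, hin⟩ := hM
    have hR := isCan_filter_right hcan hin
    have hRlow : ∀ p ∈ M.filter (fun p => i ≤ p.1), (i-1) < p.1 := by
      intro p hp
      have := (Finset.mem_filter.1 hp).2
      try simp only at this
      omega
    have hRarcs : ∀ p ∈ M.filter (fun p => i ≤ p.1), (i-1) < p.1 ∧ (i-1) < p.2 := by
      intro p hp
      have h1 := hRlow p hp
      have h2 := hcan.1 p (Finset.mem_filter.1 hp).1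
      try simp only at *
      omega
    rw [Finset.mem_product]
    constructor
    · -- spanned structure on j+1
      rw [mem_WW hlam]
      constructor
      · have := isCan_downS hlam hR hRlow
        have he : n - (i - 1) = j + 1 := by omega
        rwa [he] at this
      · rw [mem_downS hRarcs]
        have he1 : 1 + (i - 1) = i := by omega
        have he2 : j + 1 + (i - 1) = n := by omega
        rw [he1, he2]
        exact Finset.mem_filter.2 ⟨hin, by simp⟩
    · rw [mem_SS hlam]
      have := isCan_filter_left hlam hcan hin
      have he : i - 1 = k - j := by omega
      rwa [he] at this
  · -- maps back into fiber
    rintro ⟨V, L⟩ hq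
    rw [Finset.mem_product] at hq
    obtain ⟨hV, hL⟩ := hq
    rw [mem_WW hlam] at hV
    rw [mem_SS hlam] at hL
    obtain ⟨hVcan, hVspan⟩ := hV
    have hVup : IsCanSecStr n lam r (upS (i-1) V) := by
      have := isCan_upS hlam (k := i - 1) hVcan
      have he : j + 1 + (i - 1) = n := by omega
      rwa [he] at this
    have hLcan : IsCanSecStr (i - 1) lam r L := by
      have he : k - j = i - 1 := by omega
      rwa [he] at hL
    have hup_low : ∀ p ∈ upS (i-1) V, i - 1 < p.1 := by
      intro p hp
      obtain ⟨q, hqV, hqe⟩ := Finset.mem_image.1 hp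
      have hb := hVcan.1 q hqV
      rw [← hqe]
      try simp only at hb ⊢
      omega
    have hcan : IsCanSecStr n lam r (L ∪ upS (i-1) V) :=
      isCan_union hlam (by omega) hLcan hVup hup_low
    have hin : (i, n) ∈ L ∪ upS (i-1) V := by
      refine Finset.mem_union_right _ ?_
      rw [mem_upS (isCan_arcs hVcan hlam)]
      have he1 : i - (i - 1) = 1 := by omega
      have he2 : n - (i - 1) = j + 1 := by omega
      rw [he1, he2]
      exact ⟨by omega, by omega, hVspan⟩
    simp only
    rw [fiber_iff]
    exact ⟨hcan, hin⟩
  · -- left inverse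
    intro M hM
    rw [fiber_iff] at hM
    obtain ⟨hcan, hin⟩ := hM
    simp only
    have hRarcs : ∀ p ∈ M.filter (fun p => i ≤ p.1), (i-1) < p.1 ∧ (i-1) < p.2 := by
      intro p hp
      have h1 := (Finset.mem_filter.1 hp).2
      have h2 := hcan.1 p (Finset.mem_filter.1 hp).1
      try simp only at *
      omega
    rw [upS_downS hRarcs]
    rw [Finset.union_comm]
    exact Finset.filter_union_filter_not_eq _ M
  · -- right inverse
    rintro ⟨V, L⟩ hq
    rw [Finset.mem_product] at hq
    obtain ⟨hV, hL⟩ := hq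
    rw [mem_WW hlam] at hV
    rw [mem_SS hlam] at hL
    obtain ⟨hVcan, hVspan⟩ := hV
    have hLbound : ∀ p ∈ L, p.2 ≤ k - j := fun p hp => (hL.1 p hp).2.2
    have hup_low : ∀ p ∈ upS (i-1) V, i ≤ p.1 ∧ i ≤ p.2 := by
      intro p hp
      obtain ⟨q, hqV, hqe⟩ := Finset.mem_image.1 hp
      have hb := hVcan.1 q hqV
      rw [← hqe]
      try simp only at hb ⊢
      omega
    have h1 : (L ∪ upS (i-1) V).filter (fun p => i ≤ p.1) = upS (i-1) V := by
      ext p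
      simp only [Finset.mem_filter, Finset.mem_union]
      constructor
      · rintro ⟨hu | hu, hip⟩
        · exfalso
          have h1 := hLbound p hu
          have h2 := (hL.1 p hu).2.1
          omega
        · exact hu
      · intro hu
        exact ⟨Or.inr hu, (hup_low p hu).1⟩
    have h2 : (L ∪ upS (i-1) V).filter (fun p => ¬ i ≤ p.1) = L := by
      ext p
      simp only [Finset.mem_filter, Finset.mem_union]
      constructor
      · rintro ⟨hu | hu, hip⟩
        · exact hu
        · exact absurd (hup_low p hu).1 hip
      · intro hu
        have h1 := hLbound p hu
        have h2 := (hL.1 p hu).2.1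
        exact ⟨Or.inl hu, by omega⟩
    simp only
    rw [h1, h2, downS_upS]
  · -- weights
    intro M hM
    rw [fiber_iff] at hM
    obtain ⟨hcan, hin⟩ := hM
    simp only
    have hRarcs : ∀ p ∈ M.filter (fun p => i ≤ p.1), (i-1) < p.1 ∧ (i-1) < p.2 := by
      intro p hp
      have h1 := (Finset.mem_filter.1 hp).2
      have h2 := hcan.1 p (Finset.mem_filter.1 hp).1
      try simp only at *
      omega
    rw [card_downS hRarcs]
    rw [← pow_add]
    congr 1
    have hdisj := Finset.disjoint_filter_filter_not M M (fun p => i ≤ p.1)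
    have hcard : (M.filter (fun p => i ≤ p.1)).card + (M.filter (fun p => ¬ i ≤ p.1)).card
        = M.card := by
      rw [← Finset.card_union_of_disjoint hdisj, Finset.filter_union_filter_not_eq]
    omega
end E1

section E1sum
variable {lam r : ℕ}

lemma SS_pred (hlam : 1 ≤ lam) (k : ℕ) :
    (SS lam r (k+1)).filter (fun M => ∀ p ∈ M, p.2 ≠ k + 1) = SS lam r k := by
  classical
  ext M
  simp only [Finset.mem_filter, mem_SS hlam]
  constructor
  · rintro ⟨hcan, hne⟩
    refine ⟨fun p hp => ?_, hcan.2.1, hcan.2.2.1, hcan.2.2.2⟩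
    have h1 := hcan.1 p hp
    have h2 := hne p hp
    omega
  · intro hcan
    refine ⟨⟨fun p hp => ?_, hcan.2.1, hcan.2.2.1, hcan.2.2.2⟩, fun p hp => ?_⟩
    · have h1 := hcan.1 p hp
      omega
    · have h1 := hcan.1 p hp
      omega

lemma E1 (hlam : 1 ≤ lam) (hr : 1 ≤ r) (k : ℕ) :
    sP lam r (k+1) = sP lam r k
      + ∑ j ∈ Finset.range (k+1), wP lam r (j+1) * sP lam r (k-j) := by
  classical
  have hsplit := (Finset.sum_filter_add_sum_filter_not (SS lam r (k+1))
    (fun M => ∀ p ∈ M, p.2 ≠ k + 1)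
    (fun M => (Polynomial.X : Polynomial ℚ) ^ M.card)).symm
  rw [sP, hsplit, SS_pred hlam k]
  congr 1
  rw [← Finset.sum_fiberwise_of_maps_to
    (g := fun M : Finset (ℕ × ℕ) => (k + 1) - (M.filter (fun p => p.2 = k + 1)).sum Prod.fst)
    (t := Finset.range (k+1)) ?_ (fun M => (Polynomial.X : Polynomial ℚ) ^ M.card)]
  · exact Finset.sum_congr rfl (fun j hj => E1_fiber hlam hr k j hj)
  · intro M hM
    simp only [Finset.mem_filter, mem_SS hlam] at hM
    obtain ⟨hcan, hex⟩ := hM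
    push_neg at hex
    obtain ⟨p₀, hp₀, hp₀2⟩ := hex
    have hpe : p₀ = (p₀.1, k + 1) := by
      ext
      · rfl
      · exact hp₀2
    rw [hpe] at hp₀
    show k + 1 - (M.filter (fun p => p.2 = k + 1)).sum Prod.fst ∈ Finset.range (k + 1)
    rw [partner_filter hcan hp₀, Finset.sum_singleton]
    have hb := hcan.1 _ hp₀
    simp only [Finset.mem_range] at hb ⊢
    omega
end E1sum

lemma pair_eq {a b c d : ℕ} (h1 : a = c) (h2 : b = d) : ((a, b) : ℕ × ℕ) = (c, d) := by
  subst h1; subst h2; rfl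

section E2
variable {lam r : ℕ}

lemma isCan_insert_outer {n : ℕ} {N : Finset (ℕ × ℕ)} (hlam : 1 ≤ lam)
    (hN : IsCanSecStr n lam r N) (hb : ∀ p ∈ N, 2 ≤ p.1 ∧ p.2 ≤ n - 1) (hlen : 1 + lam ≤ n)
    (hstack : ∀ t, 1 ≤ t → t < r → (1 + t, n - t) ∈ N) :
    IsCanSecStr n lam r (insert (1, n) N) := by
  classical
  have hb' : ∀ p ∈ N, 2 ≤ p.1 ∧ p.1 + lam ≤ p.2 ∧ p.2 ≤ n - 1 := by
    intro p hp
    have h1 := hb p hp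
    have h2 := hN.1 p hp
    omega
  refine ⟨?_, ?_, ?_, ?_⟩
  · intro p hp
    rcases Finset.mem_insert.1 hp with rfl | h
    · simp only
      omega
    · have := hN.1 p h
      omega
  · intro p hp q hq hne
    rcases Finset.mem_insert.1 hp with rfl | h <;> rcases Finset.mem_insert.1 hq with rfl | h'
    · exact absurd rfl hne
    · have := hb' q h'
      simp only
      omega
    · have := hb' p h
      simp only
      omega
    · exact hN.2.1 p h q h' hne
  · intro p hp q hq
    rcases Finset.mem_insert.1 hp with rfl | h <;> rcases Finset.mem_insert.1 hq with rfl | h'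
    · simp only
      omega
    · have := hb' q h'
      simp only
      omega
    · have := hb' p h
      simp only
      omega
    · exact hN.2.2.1 p h q h'
  · intro p hp hpar t ht
    rcases Finset.mem_insert.1 hp with rfl | h
    · simp only
      rcases Nat.eq_zero_or_pos t with rfl | htpos
      · simpa using Finset.mem_insert_self _ _
      · have : (1 + t, n - t) ∈ N := hstack t htpos ht
        exact Finset.mem_insert_of_mem this
    · by_cases hq : (p.1 - 1, p.2 + 1) = ((1 : ℕ), n)
      · exact absurd (hq ▸ Finset.mem_insert_self (1, n) N) hpar
      · have hparN : (p.1 - 1, p.2 + 1) ∉ N := fun hc => hpar (Finset.mem_insert_of_mem hc)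
        exact Finset.mem_insert_of_mem (hN.2.2.2 p h hparN t ht)

lemma E2_claim1 (hlam : 1 ≤ lam) (hr : 1 ≤ r) {n : ℕ} (hn : 2 * r + lam - 1 ≤ n) :
    ∑ M ∈ (WW lam r n).filter (fun M => (r + 1, n - r) ∈ M),
      (Polynomial.X : Polynomial ℚ) ^ M.card
    = Polynomial.X * wP lam r (n - 2) := by
  classical
  rw [wP, Finset.mul_sum]
  refine Finset.sum_nbij' (i := fun M => downS 1 (M.erase (1, n)))
    (j := fun V => insert (1, n) (upS 1 V)) ?_ ?_ ?_ ?_ ?_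
  · -- forward map lands in WW (n-2)
    intro M hM
    obtain ⟨hMW, hrp⟩ := Finset.mem_filter.1 hM
    rw [mem_WW hlam] at hMW
    obtain ⟨hcan, h1n⟩ := hMW
    have hEarcs : ∀ p ∈ M.erase (1, n), (1 : ℕ) < p.1 ∧ (1 : ℕ) < p.2 ∧ p.2 ≤ n - 1 := by
      intro p hp
      obtain ⟨hne, hpM⟩ := Finset.mem_erase.1 hp
      have hd := hcan.2.1 p hpM _ h1n hne
      have hbd := hcan.1 p hpM
      try simp only at hd hbd
      omega
    have hEcan : IsCanSecStr n lam r (M.erase (1, n)) := by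
      refine ⟨fun p hp => hcan.1 p (Finset.mem_erase.1 hp).2,
        fun p hp q hq => hcan.2.1 p (Finset.mem_erase.1 hp).2 q (Finset.mem_erase.1 hq).2,
        fun p hp q hq => hcan.2.2.1 p (Finset.mem_erase.1 hp).2 q (Finset.mem_erase.1 hq).2,
        ?_⟩
      intro p hp hpar t ht
      obtain ⟨hne, hpM⟩ := Finset.mem_erase.1 hp
      have hbd := hEarcs p hp
      by_cases hq : (p.1 - 1, p.2 + 1) = ((1 : ℕ), n)
      · -- p = (2, n-1)
        have hp2 : p.1 = 2 ∧ p.2 = n - 1 := by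
          have := Prod.mk.injEq (p.1 - 1) (p.2 + 1) 1 n ▸ hq
          simp only [Prod.mk.injEq] at hq
          omega
        have hgoal : (p.1 + t, p.2 - t) = (2 + t, n - 1 - t) := by
          rw [hp2.1, hp2.2]
        rw [hgoal]
        rcases Nat.lt_or_ge (t + 1) r with h' | h'
        · have hst := stack_mem hcan h1n h'
          have he : (1 + (t + 1), n - (t + 1)) = (2 + t, n - 1 - t) :=
            pair_eq (by omega) (by omega)
          rw [he] at hst
          refine Finset.mem_erase.2 ⟨by simp only [ne_eq, Prod.mk.injEq]; omega, hst⟩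
        · have ht' : t = r - 1 := by omega
          have he : ((r : ℕ) + 1, n - r) = (2 + t, n - 1 - t) :=
            pair_eq (by omega) (by omega)
          rw [← he]
          refine Finset.mem_erase.2 ⟨by simp only [ne_eq, Prod.mk.injEq]; omega, hrp⟩
      · have hparM : (p.1 - 1, p.2 + 1) ∉ M := by
          intro hc
          exact hpar (Finset.mem_erase.2 ⟨hq, hc⟩)
        have hst := hcan.2.2.2 p hpM hparM t ht
        refine Finset.mem_erase.2 ⟨?_, hst⟩
        simp only [ne_eq, Prod.mk.injEq]
        omega
    rw [mem_WW hlam]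
    constructor
    · have h1 := isCan_downS hlam hEcan (fun p hp => (hEarcs p hp).1)
      refine isCan_of h1 ?_
      intro p hp
      simp only [downS, Finset.mem_image] at hp
      obtain ⟨q, hq, rfl⟩ := hp
      have := hEarcs q hq
      simp only
      omega
    · rw [mem_downS (fun p hp => ⟨(hEarcs p hp).1, (hEarcs p hp).2.1⟩)]
      have he : ((1 : ℕ) + 1, n - 2 + 1) = (2, n - 1) := pair_eq (by omega) (by omega)
      rw [he]
      refine Finset.mem_erase.2 ⟨by simp only [ne_eq, Prod.mk.injEq]; omega, ?_⟩
      rcases Nat.lt_or_ge 1 r with h' | h'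
      · have hst := stack_mem hcan h1n h'
        have he2 : (1 + 1, n - 1) = ((2 : ℕ), n - 1) := by simp
        rwa [he2] at hst
      · have hre : r = 1 := by omega
        have : ((r : ℕ) + 1, n - r) = (2, n - 1) := by
          rw [hre]
        rwa [this] at hrp
  · -- backward map lands in the filter set
    intro V hV
    rw [mem_WW hlam] at hV
    obtain ⟨hVcan, hVsp⟩ := hV
    have hVn : 1 + lam ≤ n - 2 := (hVcan.1 _ hVsp).2.1
    have hUp : IsCanSecStr n lam r (upS 1 V) := by
      have h1 := isCan_upS hlam (k := 1) hVcan
      refine isCan_of h1 ?_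
      intro p hp
      simp only [upS, Finset.mem_image] at hp
      obtain ⟨q, hq, rfl⟩ := hp
      have := hVcan.1 q hq
      simp only
      omega
    have hUb : ∀ p ∈ upS 1 V, 2 ≤ p.1 ∧ p.2 ≤ n - 1 := by
      intro p hp
      simp only [upS, Finset.mem_image] at hp
      obtain ⟨q, hq, rfl⟩ := hp
      have := hVcan.1 q hq
      simp only
      omega
    have hUstack : ∀ t, 1 ≤ t → t < r → (1 + t, n - t) ∈ upS 1 V := by
      intro t ht1 htr
      rw [mem_upS (isCan_arcs hVcan hlam)]
      refine ⟨by omega, by omega, ?_⟩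
      have hst := stack_mem hVcan hVsp (show t - 1 < r by omega)
      have he : (1 + (t - 1), n - 2 - (t - 1)) = (1 + t - 1, n - t - 1) :=
        pair_eq (by omega) (by omega)
      rwa [he] at hst
    have hcan : IsCanSecStr n lam r (insert (1, n) (upS 1 V)) :=
      isCan_insert_outer hlam hUp hUb (by omega) hUstack
    refine Finset.mem_filter.2 ⟨?_, ?_⟩
    · rw [mem_WW hlam]
      exact ⟨hcan, Finset.mem_insert_self _ _⟩
    · refine Finset.mem_insert_of_mem ?_
      rw [mem_upS (isCan_arcs hVcan hlam)]
      refine ⟨by omega, by omega, ?_⟩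
      have hst := stack_mem hVcan hVsp (show r - 1 < r by omega)
      have he : (1 + (r - 1), n - 2 - (r - 1)) = (r + 1 - 1, n - r - 1) :=
        pair_eq (by omega) (by omega)
      rwa [he] at hst
  · -- left inverse
    intro M hM
    obtain ⟨hMW, hrp⟩ := Finset.mem_filter.1 hM
    rw [mem_WW hlam] at hMW
    obtain ⟨hcan, h1n⟩ := hMW
    have hEarcs : ∀ p ∈ M.erase (1, n), (1 : ℕ) < p.1 ∧ (1 : ℕ) < p.2 := by
      intro p hp
      obtain ⟨hne, hpM⟩ := Finset.mem_erase.1 hp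
      have hd := hcan.2.1 p hpM _ h1n hne
      have hbd := hcan.1 p hpM
      try simp only at hd hbd
      omega
    show insert (1, n) (upS 1 (downS 1 (M.erase (1, n)))) = M
    rw [upS_downS hEarcs, Finset.insert_erase h1n]
  · -- right inverse
    intro V hV
    rw [mem_WW hlam] at hV
    obtain ⟨hVcan, hVsp⟩ := hV
    have h1 : ((1 : ℕ), n) ∉ upS 1 V := by
      intro hc
      simp only [upS, Finset.mem_image] at hc
      obtain ⟨q, hq, he⟩ := hc
      have := hVcan.1 q hq
      simp only [Prod.mk.injEq] at he
      omega
    show downS 1 ((insert (1, n) (upS 1 V)).erase (1, n)) = V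
    rw [Finset.erase_insert h1, downS_upS]
  · -- weights
    intro M hM
    obtain ⟨hMW, hrp⟩ := Finset.mem_filter.1 hM
    rw [mem_WW hlam] at hMW
    obtain ⟨hcan, h1n⟩ := hMW
    have hEarcs : ∀ p ∈ M.erase (1, n), (1 : ℕ) < p.1 ∧ (1 : ℕ) < p.2 := by
      intro p hp
      obtain ⟨hne, hpM⟩ := Finset.mem_erase.1 hp
      have hd := hcan.2.1 p hpM _ h1n hne
      have hbd := hcan.1 p hpM
      try simp only at hd hbd
      omega
    show (Polynomial.X : Polynomial ℚ) ^ M.card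
      = Polynomial.X * Polynomial.X ^ (downS 1 (M.erase (1, n))).card
    rw [card_downS hEarcs, Finset.card_erase_of_mem h1n]
    have hpos : 1 ≤ M.card := Finset.card_pos.2 ⟨_, h1n⟩
    have he : M.card = (M.card - 1) + 1 := by omega
    conv_lhs => rw [he]
    rw [pow_succ]
    ring
end E2

section E2b
variable {lam r : ℕ}

/-- the stack `(1,n), (2,n-1), …, (r, n-r+1)` -/
def stackSet (r n : ℕ) : Finset (ℕ × ℕ) := (Finset.range r).image (fun t => (1 + t, n - t))

lemma mem_stackSet {r n : ℕ} {q : ℕ × ℕ} :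
    q ∈ stackSet r n ↔ ∃ t < r, q = (1 + t, n - t) := by
  simp only [stackSet, Finset.mem_image, Finset.mem_range]
  constructor
  · rintro ⟨t, ht, rfl⟩; exact ⟨t, ht, rfl⟩
  · rintro ⟨t, ht, rfl⟩; exact ⟨t, ht, rfl⟩

lemma stackSet_bounds {r n : ℕ} (hn : r ≤ n) {q : ℕ × ℕ} (hq : q ∈ stackSet r n) :
    1 ≤ q.1 ∧ q.1 ≤ r ∧ q.1 + q.2 = n + 1 := by
  rw [mem_stackSet] at hq
  obtain ⟨t, ht, rfl⟩ := hq
  simp only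
  omega

lemma card_stackSet {r n : ℕ} (hn : 2 * r ≤ n + 1) : (stackSet r n).card = r := by
  rw [stackSet, Finset.card_image_of_injOn, Finset.card_range]
  intro a ha b hb he
  simp only [Finset.coe_range, Set.mem_Iio] at ha hb
  simp only [Prod.mk.injEq] at he
  omega

lemma E2_claim2 (hlam : 1 ≤ lam) (hr : 1 ≤ r) {n : ℕ} (hn : 2 * r + lam - 1 ≤ n) :
    ∑ M ∈ (WW lam r n).filter (fun M => (r + 1, n - r) ∉ M),
      (Polynomial.X : Polynomial ℚ) ^ M.card
    = Polynomial.X ^ r * (sP lam r (n - 2 * r) - wP lam r (n - 2 * r)) := by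
  classical
  set m := n - 2 * r with hm
  have hsw : sP lam r m - wP lam r m
      = ∑ M ∈ (SS lam r m).filter (fun M => (1, m) ∉ M),
          (Polynomial.X : Polynomial ℚ) ^ M.card := by
    have h1 := Finset.sum_filter_add_sum_filter_not (SS lam r m) (fun M => (1, m) ∈ M)
      (fun M => (Polynomial.X : Polynomial ℚ) ^ M.card)
    rw [sP, wP, WW]
    linear_combination h1.symm
  rw [hsw, Finset.mul_sum]
  refine Finset.sum_nbij' (i := fun M => downS r (M.filter (fun p => r + 1 ≤ p.1)))
    (j := fun V => stackSet r n ∪ upS r V) ?_ ?_ ?_ ?_ ?_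
  · -- forward
    intro M hM
    obtain ⟨hMW, hrp⟩ := Finset.mem_filter.1 hM
    rw [mem_WW hlam] at hMW
    obtain ⟨hcan, h1n⟩ := hMW
    have hRlow : ∀ p ∈ M.filter (fun p => r + 1 ≤ p.1), r < p.1 ∧ r < p.2 := by
      intro p hp
      obtain ⟨hpM, hpr⟩ := Finset.mem_filter.1 hp
      have := hcan.1 p hpM
      try simp only at hpr ⊢
      omega
    have hRsnd : ∀ p ∈ M.filter (fun p => r + 1 ≤ p.1), p.2 ≤ n - r := by
      intro p hp
      obtain ⟨hpM, hpr⟩ := Finset.mem_filter.1 hp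
      by_contra hcon
      have hb := hcan.1 p hpM
      have := stack_arc' hcan h1n hpM (by omega)
      try simp only at hpr
      rw [this] at hpr
      try simp only at hpr hcon
      omega
    have hRcan : IsCanSecStr n lam r (M.filter (fun p => r + 1 ≤ p.1)) := by
      refine ⟨fun p hp => hcan.1 p (Finset.mem_filter.1 hp).1,
        fun p hp q hq => hcan.2.1 p (Finset.mem_filter.1 hp).1 q (Finset.mem_filter.1 hq).1,
        fun p hp q hq => hcan.2.2.1 p (Finset.mem_filter.1 hp).1 q (Finset.mem_filter.1 hq).1,
        ?_⟩
      intro p hp hpar t ht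
      obtain ⟨hpM, hpr⟩ := Finset.mem_filter.1 hp
      try simp only at hpr
      have hparM : (p.1 - 1, p.2 + 1) ∉ M := by
        intro hc
        rcases Nat.lt_or_ge r (p.1 - 1) with h' | h'
        · exact hpar (Finset.mem_filter.2 ⟨hc, by simp only; omega⟩)
        · -- parent is a stack arc: forces p = (r+1, n-r) ∈ M, contradiction
          have hsa := stack_arc hcan h1n hc (by simp only; omega)
          have hb := hcan.1 _ hc
          have hb2 := hcan.1 p hpM
          simp only [Prod.mk.injEq] at hsa
          -- p.1 - 1 ≤ r and p.1 ≥ r + 1 gives p.1 = r + 1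
          have hp1 : p.1 = r + 1 := by omega
          have hp2 : p.2 = n - r := by omega
          apply hrp
          have : p = (r + 1, n - r) := pair_eq hp1 hp2 ▸ (by ext <;> simp [hp1, hp2])
          rwa [this] at hpM
      have hst := hcan.2.2.2 p hpM hparM t ht
      exact Finset.mem_filter.2 ⟨hst, by simp only; omega⟩
    refine Finset.mem_filter.2 ⟨?_, ?_⟩
    · rw [mem_SS hlam]
      have h1 := isCan_downS hlam hRcan (fun p hp => (hRlow p hp).1)
      refine isCan_of h1 ?_
      intro p hp
      simp only [downS, Finset.mem_image] at hp
      obtain ⟨q, hq, rfl⟩ := hp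
      have h2 := hRsnd q hq
      simp only
      omega
    · rw [mem_downS hRlow]
      intro hc
      have he : ((1 : ℕ) + r, m + r) = (r + 1, n - r) := pair_eq (by omega) (by omega)
      rw [he] at hc
      exact hrp (Finset.mem_filter.1 hc).1
  · -- backward
    intro V hV
    obtain ⟨hVS, hVns⟩ := Finset.mem_filter.1 hV
    rw [mem_SS hlam] at hVS
    have hVarcs := isCan_arcs hVS hlam
    have hSb : ∀ q ∈ stackSet r n, 1 ≤ q.1 ∧ q.1 ≤ r ∧ q.1 + q.2 = n + 1 :=
      fun q hq => stackSet_bounds (by omega) hq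
    have hUb : ∀ q ∈ upS r V, r + 1 ≤ q.1 ∧ q.1 + lam ≤ q.2 ∧ q.2 ≤ n - r := by
      intro q hq
      simp only [upS, Finset.mem_image] at hq
      obtain ⟨p, hp, rfl⟩ := hq
      have := hVS.1 p hp
      simp only
      omega
    have hcanU : IsCanSecStr n lam r (stackSet r n ∪ upS r V) := by
      refine ⟨?_, ?_, ?_, ?_⟩
      · intro p hp
        rcases Finset.mem_union.1 hp with h | h
        · have h1 := hSb p h
          omega
        · have h1 := hUb p h
          omega
      · intro p hp q hq hne
        rcases Finset.mem_union.1 hp with h | h <;> rcases Finset.mem_union.1 hq with h' | h'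
        · have h1 := hSb p h
          have h2 := hSb q h'
          have h3 : p.1 ≠ q.1 := by
            intro hc
            exact hne (by ext <;> omega)
          omega
        · have h1 := hSb p h
          have h2 := hUb q h'
          omega
        · have h1 := hUb p h
          have h2 := hSb q h'
          omega
        · have hpV := (mem_upS hVarcs (a := p.1) (b := p.2)).1 (by simpa using h)
          have hqV := (mem_upS hVarcs (a := q.1) (b := q.2)).1 (by simpa using h')
          have hp1 := hUb p h
          have hq1 := hUb q h'
          have hne' : ((p.1 - r, p.2 - r) : ℕ × ℕ) ≠ (q.1 - r, q.2 - r) := by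
            intro hc
            rw [Prod.mk.injEq] at hc
            exact hne (by ext <;> omega)
          have := hVS.2.1 _ hpV.2.2 _ hqV.2.2 hne'
          try simp only at this
          omega
      · intro p hp q hq
        rcases Finset.mem_union.1 hp with h | h <;> rcases Finset.mem_union.1 hq with h' | h'
        · have h1 := hSb p h
          have h2 := hSb q h'
          omega
        · have h1 := hSb p h
          have h2 := hUb q h'
          omega
        · have h1 := hUb p h
          have h2 := hSb q h'
          omega
        · have hpV := (mem_upS hVarcs (a := p.1) (b := p.2)).1 (by simpa using h)
          have hqV := (mem_upS hVarcs (a := q.1) (b := q.2)).1 (by simpa using h')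
          have := hVS.2.2.1 _ hpV.2.2 _ hqV.2.2
          try simp only at this
          have hp1 := hUb p h
          have hq1 := hUb q h'
          omega
      · intro p hp hpar t ht
        rcases Finset.mem_union.1 hp with h | h
        · rw [mem_stackSet] at h
          obtain ⟨s, hs, rfl⟩ := h
          rcases Nat.eq_zero_or_pos s with rfl | hspos
          · refine Finset.mem_union_left _ ?_
            rw [mem_stackSet]
            refine ⟨t, ht, ?_⟩
            exact pair_eq (by omega) (by omega)
          · exfalso
            apply hpar
            refine Finset.mem_union_left _ ?_
            rw [mem_stackSet]
            refine ⟨s - 1, by omega, ?_⟩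
            exact pair_eq (by omega) (by omega)
        · have hpV := (mem_upS hVarcs (a := p.1) (b := p.2)).1 (by simpa using h)
          obtain ⟨hr1, hr2, hmemV⟩ := hpV
          have hbV := hVS.1 _ hmemV
          try simp only at hbV
          have hparV : (p.1 - r - 1, p.2 - r + 1) ∉ V := by
            intro hc
            have hbc := hVS.1 _ hc
            try simp only at hbc
            apply hpar
            refine Finset.mem_union_right _ ?_
            rw [mem_upS hVarcs]
            refine ⟨by omega, by omega, ?_⟩
            have : (p.1 - 1 - r, p.2 + 1 - r) = (p.1 - r - 1, p.2 - r + 1) :=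
              pair_eq (by omega) (by omega)
            rwa [this]
          have hst := hVS.2.2.2 _ hmemV (by
            have : ((p.1 - r) - 1, (p.2 - r) + 1) = (p.1 - r - 1, p.2 - r + 1) := by rfl
            rw [this]
            exact hparV) t ht
          have hbst := hVS.1 _ hst
          try simp only at hbst
          refine Finset.mem_union_right _ ?_
          rw [mem_upS hVarcs]
          refine ⟨by omega, by omega, ?_⟩
          have : (p.1 + t - r, p.2 - t - r) = (p.1 - r + t, p.2 - r - t) :=
            pair_eq (by omega) (by omega)
          rwa [this]
    refine Finset.mem_filter.2 ⟨?_, ?_⟩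
    · rw [mem_WW hlam]
      refine ⟨hcanU, Finset.mem_union_left _ ?_⟩
      rw [mem_stackSet]
      exact ⟨0, by omega, by exact pair_eq (by omega) (by omega)⟩
    · intro hc
      rcases Finset.mem_union.1 hc with h | h
      · have := hSb _ h
        try simp only at this
        omega
      · have := (mem_upS hVarcs (a := r + 1) (b := n - r)).1 (by simpa using h)
        obtain ⟨_, _, hmemV⟩ := this
        have he : ((r + 1 - r : ℕ), n - r - r) = (1, m) := pair_eq (by omega) (by omega)
        rw [he] at hmemV
        exact hVns hmemV
  · -- left inverse
    intro M hM
    obtain ⟨hMW, hrp⟩ := Finset.mem_filter.1 hM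
    rw [mem_WW hlam] at hMW
    obtain ⟨hcan, h1n⟩ := hMW
    have hRlow : ∀ p ∈ M.filter (fun p => r + 1 ≤ p.1), r < p.1 ∧ r < p.2 := by
      intro p hp
      obtain ⟨hpM, hpr⟩ := Finset.mem_filter.1 hp
      have := hcan.1 p hpM
      try simp only at hpr ⊢
      omega
    show stackSet r n ∪ upS r (downS r (M.filter (fun p => r + 1 ≤ p.1))) = M
    rw [upS_downS hRlow]
    ext q
    simp only [Finset.mem_union, Finset.mem_filter, mem_stackSet]
    constructor
    · rintro (⟨t, ht, rfl⟩ | ⟨hq, _⟩)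
      · exact stack_mem hcan h1n ht
      · exact hq
    · intro hq
      rcases Nat.lt_or_ge r q.1 with h' | h'
      · exact Or.inr ⟨hq, by omega⟩
      · left
        have hb := hcan.1 q hq
        have := stack_arc hcan h1n hq h'
        exact ⟨q.1 - 1, by omega, by rw [this]; exact pair_eq (by omega) (by omega)⟩
  · -- right inverse
    intro V hV
    obtain ⟨hVS, hVns⟩ := Finset.mem_filter.1 hV
    rw [mem_SS hlam] at hVS
    have hVarcs := isCan_arcs hVS hlam
    show downS r ((stackSet r n ∪ upS r V).filter (fun p => r + 1 ≤ p.1)) = V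
    have hfe : (stackSet r n ∪ upS r V).filter (fun p => r + 1 ≤ p.1) = upS r V := by
      ext q
      simp only [Finset.mem_filter, Finset.mem_union]
      constructor
      · rintro ⟨h | h, hge⟩
        · have := stackSet_bounds (show r ≤ n by omega) h
          omega
        · exact h
      · intro h
        obtain ⟨hq1, _, _⟩ := (mem_upS hVarcs (a := q.1) (b := q.2)).1 (by simpa using h)
        exact ⟨Or.inr h, by omega⟩
    rw [hfe, downS_upS]
  · -- weights
    intro M hM
    obtain ⟨hMW, hrp⟩ := Finset.mem_filter.1 hM
    rw [mem_WW hlam] at hMW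
    obtain ⟨hcan, h1n⟩ := hMW
    have hRlow : ∀ p ∈ M.filter (fun p => r + 1 ≤ p.1), r < p.1 ∧ r < p.2 := by
      intro p hp
      obtain ⟨hpM, hpr⟩ := Finset.mem_filter.1 hp
      have := hcan.1 p hpM
      try simp only at hpr ⊢
      omega
    show (Polynomial.X : Polynomial ℚ) ^ M.card
      = Polynomial.X ^ r * Polynomial.X ^ (downS r (M.filter (fun p => r + 1 ≤ p.1))).card
    rw [card_downS hRlow, ← pow_add]
    congr 1
    -- M = stackSet ∪ R, disjoint
    have hsplit : M = stackSet r n ∪ M.filter (fun p => r + 1 ≤ p.1) := by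
      ext q
      simp only [Finset.mem_union, Finset.mem_filter, mem_stackSet]
      constructor
      · intro hq
        rcases Nat.lt_or_ge r q.1 with h' | h'
        · exact Or.inr ⟨hq, by omega⟩
        · left
          have hb := hcan.1 q hq
          have := stack_arc hcan h1n hq h'
          exact ⟨q.1 - 1, by omega, by rw [this]; exact pair_eq (by omega) (by omega)⟩
      · rintro (⟨t, ht, rfl⟩ | ⟨hq, _⟩)
        · exact stack_mem hcan h1n ht
        · exact hq
    have hdisj : Disjoint (stackSet r n) (M.filter (fun p => r + 1 ≤ p.1)) := by
      rw [Finset.disjoint_left]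
      intro q hq hq'
      have h1 := stackSet_bounds (show r ≤ n by omega) hq
      have h2 := (Finset.mem_filter.1 hq').2
      try simp only at h2
      omega
    conv_lhs => rw [hsplit]
    rw [Finset.card_union_of_disjoint hdisj, card_stackSet (by omega)]
end E2b

section Series
open Finset
variable {lam r : ℕ}

lemma W1 (hlam : 1 ≤ lam) (hr : 1 ≤ r) {n : ℕ} (hn : 2 * r + lam - 1 ≤ n) :
    wP lam r n = Polynomial.X * wP lam r (n - 2)
      + Polynomial.X ^ r * (sP lam r (n - 2 * r) - wP lam r (n - 2 * r)) := by
  classical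
  rw [wP, ← Finset.sum_filter_add_sum_filter_not (WW lam r n) (fun M => (r + 1, n - r) ∈ M)]
  rw [E2_claim1 hlam hr hn, E2_claim2 hlam hr hn]

noncomputable def Wgf (lam r : ℕ) : PowerSeries (Polynomial ℚ) :=
  PowerSeries.mk fun n => wP lam r n

noncomputable def Pgf (lam : ℕ) : PowerSeries (Polynomial ℚ) :=
  ∑ i ∈ Finset.range (lam - 1), PowerSeries.X ^ i

lemma coeff_mul_xxy_pow (f : PowerSeries (Polynomial ℚ)) (k n : ℕ) :
    coeff n (f * xxy ^ k)
      = if 2 * k ≤ n then Polynomial.X ^ k * coeff (n - 2 * k) f else 0 := by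
  have hxx : xxy ^ k = X ^ (2 * k) * PowerSeries.C (Polynomial.X ^ k) := by
    rw [xxy, mul_pow, ← pow_mul, map_pow]
  have hco : f * xxy ^ k
      = X ^ (2 * k) * (PowerSeries.C (Polynomial.X ^ k) * f) := by
    rw [hxx]; ring
  rw [hco]
  split_ifs with h
  · obtain ⟨d, rfl⟩ : ∃ d, n = d + 2 * k := ⟨n - 2 * k, by omega⟩
    rw [coeff_X_pow_mul, coeff_C_mul, Nat.add_sub_cancel]
  · exact coeff_X_pow_mul_of_lt (by omega) _

lemma coeff_Pgf (lam n : ℕ) :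
    coeff n (Pgf lam) = if n < lam - 1 then 1 else 0 := by
  rw [Pgf, map_sum]
  simp only [coeff_X_pow]
  rw [Finset.sum_ite_eq (Finset.range (lam - 1)) n (fun _ => (1 : Polynomial ℚ))]
  simp [Finset.mem_range]

lemma coeff_Wgf (n : ℕ) : coeff n (Wgf lam r) = wP lam r n := coeff_mk _ _

lemma hP1 (hlam : 1 ≤ lam) (hr : 1 ≤ r) :
    Sgf lam r = 1 + X * Sgf lam r + Wgf lam r * Sgf lam r := by
  refine PowerSeries.ext fun n => ?_
  rw [map_add, map_add, coeff_Sgf lam r hlam n, PowerSeries.coeff_one,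
    PowerSeries.coeff_mul n (Wgf lam r) (Sgf lam r)]
  have hconv : ∀ p ∈ Finset.HasAntidiagonal.antidiagonal n,
      coeff p.1 (Wgf lam r) * coeff p.2 (Sgf lam r)
        = wP lam r p.1 * sP lam r p.2 := by
    intro p _
    rw [coeff_Wgf, coeff_Sgf lam r hlam]
  rw [Finset.sum_congr rfl hconv]
  cases n with
  | zero =>
    rw [coeff_zero_X_mul, sP_zero hlam]
    simp only [Finset.Nat.antidiagonal_zero, Finset.sum_singleton]
    rw [wP_small hlam hr (by omega), sP_zero hlam]
    norm_num
  | succ k =>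
    rw [coeff_succ_X_mul, coeff_Sgf lam r hlam k, if_neg (by omega)]
    rw [Finset.Nat.sum_antidiagonal_eq_sum_range_succ_mk, Finset.sum_range_succ']
    rw [wP_small hlam hr (by omega), zero_mul, add_zero]
    rw [E1 hlam hr k]
    have : ∀ j ∈ Finset.range (k + 1),
        wP lam r (j + 1) * sP lam r (k + 1 - (j + 1))
          = wP lam r (j + 1) * sP lam r (k - j) := by
      intro j _
      congr 2
      omega
    rw [Finset.sum_congr rfl this]
    ring

lemma hP2 (hlam : 1 ≤ lam) (hr : 1 ≤ r) :
    Wgf lam r * Agf r = xxy ^ r * (Sgf lam r - Pgf lam) := by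
  refine PowerSeries.ext fun n => ?_
  have hL : Wgf lam r * Agf r = Wgf lam r - Wgf lam r * xxy ^ 1 + Wgf lam r * xxy ^ r := by
    rw [Agf]; ring
  rw [hL, map_add, map_sub, coeff_mul_xxy_pow, coeff_mul_xxy_pow,
    mul_comm (xxy ^ r), coeff_mul_xxy_pow, map_sub, coeff_Sgf lam r hlam, coeff_Pgf]
  simp only [coeff_Wgf]
  by_cases h1 : 2 * r ≤ n
  · rw [if_pos h1, if_pos (by omega)]
    by_cases h2 : 2 * r + lam - 1 ≤ n
    · rw [if_neg (show ¬ (n - 2 * r < lam - 1) by omega)]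
      have he : n - 2 * 1 = n - 2 := by omega
      rw [he, W1 hlam hr h2]
      first | (split_ifs <;> first | ring | omega) | ring
    · have hw1 : wP lam r n = 0 := wP_small hlam hr (by omega)
      have hw2 : wP lam r (n - 2 * 1) = 0 := wP_small hlam hr (by omega)
      have hw3 : wP lam r (n - 2 * r) = 0 := wP_small hlam hr (by omega)
      rw [if_pos (show n - 2 * r < lam - 1 by omega), hw1, hw2, hw3,
        sP_small hlam (by omega)]
      first | (split_ifs <;> first | ring | omega) | ring
  · rw [if_neg h1, if_neg (show ¬ (2 * r ≤ n) by omega)]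
    have hw1 : wP lam r n = 0 := wP_small hlam hr (by omega)
    by_cases h3 : 2 * 1 ≤ n
    · rw [if_pos h3]
      have hw2 : wP lam r (n - 2 * 1) = 0 := wP_small hlam hr (by omega)
      rw [hw1, hw2]
      first | (split_ifs <;> first | ring | omega) | ring
    · rw [if_neg h3, hw1]
      first | (split_ifs <;> first | ring | omega) | ring

lemma Sgf_quad (hlam : 1 ≤ lam) (hr : 1 ≤ r) :
    Bgf lam r * Sgf lam r = Agf r + xxy ^ r * (Sgf lam r * Sgf lam r) := by
  have hBdef : Bgf lam r
      = (1 - X) * Agf r + xxy ^ r * Pgf lam := rfl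
  have h1 := hP1 (lam := lam) (r := r) hlam hr
  have h2 := hP2 (lam := lam) (r := r) hlam hr
  linear_combination (Sgf lam r) * hBdef + Agf r * h1 + Sgf lam r * h2

end Series

section Final

lemma cc_xxy : constantCoeff xxy = 0 := by
  simp [xxy]

lemma cc_xxy_pow {r : ℕ} (hr : 1 ≤ r) : constantCoeff (xxy ^ r) = 0 := by
  rw [map_pow, cc_xxy, zero_pow (by omega)]

lemma cc_A {r : ℕ} (hr : 1 ≤ r) : constantCoeff (Agf r) = 1 := by
  simp [Agf, cc_xxy, cc_xxy_pow hr]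

lemma cc_B {lam r : ℕ} (hr : 1 ≤ r) : constantCoeff (Bgf lam r) = 1 := by
  simp [Bgf, cc_xxy, cc_xxy_pow hr, cc_A hr]

lemma Binv {lam r : ℕ} (hr : 1 ≤ r) : Bgf lam r * Ring.inverse (Bgf lam r) = 1 := by
  apply Ring.mul_inverse_cancel
  rw [PowerSeries.isUnit_iff_constantCoeff, cc_B hr]
  exact isUnit_one

lemma cc_z0 {lam r : ℕ} (hr : 1 ≤ r) : constantCoeff (z0 lam r) = 0 := by
  simp [z0, cc_xxy_pow hr]

lemma X_sq_dvd_xxy_pow {r : ℕ} (hr : 1 ≤ r) : (X : PowerSeries (Polynomial ℚ)) ^ 2 ∣ xxy ^ r := by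
  have h : (X : PowerSeries (Polynomial ℚ)) ^ 2 ∣ xxy := ⟨PowerSeries.C Polynomial.X, rfl⟩
  exact dvd_pow h (by omega)

end Final

/-- `S(x,y) = (A(x,y)/B(x,y)) · C((x²y)^r · A(x,y)/B(x,y)²)` where `C` is the generating
function of the Catalan numbers. -/
theorem Sgf_catalan_form (lam r : ℕ) (hlam : 1 ≤ lam) (hr : 1 ≤ r) :
    Sgf lam r = Agf r * Ring.inverse (Bgf lam r) * CatAt lam r := by
  have hC : CatAt lam r = 1 + z0 lam r * (CatAt lam r * CatAt lam r) :=
    catAt_eq (z0 lam r) (cc_z0 hr)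
  have hz0d : z0 lam r = xxy ^ r * Agf r * (Ring.inverse (Bgf lam r)) ^ 2 := rfl
  have hi := Binv (lam := lam) hr
  have hF : Bgf lam r * (Agf r * Ring.inverse (Bgf lam r) * CatAt lam r) =
      Agf r + xxy ^ r * ((Agf r * Ring.inverse (Bgf lam r) * CatAt lam r) *
        (Agf r * Ring.inverse (Bgf lam r) * CatAt lam r)) := by
    linear_combination (Agf r * CatAt lam r) * hi + Agf r * hC +
      (Agf r * CatAt lam r * CatAt lam r) * hz0d
  exact quad_uniq (cc_B hr) (X_sq_dvd_xxy_pow hr) (Sgf_quad hlam hr) hF
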